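/- Let V be a finite-dimensional real vector space, U ⊆ V a subspace with inclusion map i : U → V, and L ⊆ 𝕋V = V × V* a Lagrangian subspace. Then i_!(i^!(L)) = L[{0} × ann(U)] = (L ∩ (U × V*)) + ({0} × ann(U)), where ann(U) := {ξ ∈ V* : ξ vanishes on U}, i^!(L) := {(u, ξ|_U) : u ∈ U, (u, ξ) ∈ L} ⊆ U × U*, and i_!(L') := {(u, ζ) ∈ V × V* : u ∈ U, (u, ζ|_U) ∈ L'}. -/

import Mathlib

open Module

variable {V W : Type*} [AddCommGroup V] [Module ℝ V] [AddCommGroup W] [Module ℝ W]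

/-- The canonical symmetric pairing on the generalized tangent space `𝕋V = V × V*`:
`⟨(u,ξ),(v,η)⟩ = ξ(v) + η(u)`. -/
noncomputable def gpair : (V × Module.Dual ℝ V) →ₗ[ℝ] (V × Module.Dual ℝ V) →ₗ[ℝ] ℝ :=
  LinearMap.mk₂ ℝ (fun a b => a.2 b.1 + b.2 a.1)
    (fun a a' b => by
      simp only [Prod.fst_add, Prod.snd_add, LinearMap.add_apply, map_add]; ring)
    (fun r a b => by
      simp only [Prod.smul_fst, Prod.smul_snd, LinearMap.smul_apply, map_smul,
        smul_eq_mul]; ring)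
    (fun a b b' => by
      simp only [Prod.fst_add, Prod.snd_add, LinearMap.add_apply, map_add]; ring)
    (fun r a b => by
      simp only [Prod.smul_fst, Prod.smul_snd, LinearMap.smul_apply, map_smul,
        smul_eq_mul]; ring)

/-- Orthogonal complement with respect to the canonical pairing on `𝕋V`. -/
noncomputable def gperp (S : Submodule ℝ (V × Module.Dual ℝ V)) :
    Submodule ℝ (V × Module.Dual ℝ V) where
  carrier := {a | ∀ b ∈ S, gpair a b = 0}
  add_mem' := by
    intro a b ha hb c hc
    rw [map_add, LinearMap.add_apply, ha c hc, hb c hc, add_zero]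
  zero_mem' := by
    intro c hc
    rw [map_zero, LinearMap.zero_apply]
  smul_mem' := by
    intro r a ha c hc
    rw [map_smul, LinearMap.smul_apply, ha c hc, smul_zero]

/-- A subspace of `𝕋V` is Lagrangian if it equals its own orthogonal complement. -/
def IsLagrangian (L : Submodule ℝ (V × Module.Dual ℝ V)) : Prop :=
  gperp L = L

/-- A linear map `π : V* → V` is skew-symmetric. -/
def IsSkew (π : Module.Dual ℝ V →ₗ[ℝ] V) : Prop :=
  ∀ ξ η : Module.Dual ℝ V, η (π ξ) = -(ξ (π η))

/-- The tangent product `L ⋆ R = {(u, ξ+η) : (u,ξ) ∈ L, (u,η) ∈ R}`. -/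
def tanProd (L R : Submodule ℝ (V × Module.Dual ℝ V)) :
    Submodule ℝ (V × Module.Dual ℝ V) where
  carrier := {a | ∃ ξ η : Module.Dual ℝ V, (a.1, ξ) ∈ L ∧ (a.1, η) ∈ R ∧ a.2 = ξ + η}
  add_mem' := by
    rintro a b ⟨ξ, η, h1, h2, h3⟩ ⟨ξ', η', h1', h2', h3'⟩
    refine ⟨ξ + ξ', η + η', ?_, ?_, ?_⟩
    · simpa [Prod.fst_add] using L.add_mem h1 h1'
    · simpa [Prod.fst_add] using R.add_mem h2 h2'
    · simp only [Prod.snd_add, h3, h3']; abel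
  zero_mem' := ⟨0, 0, by (try simp only [Prod.fst_zero, Prod.snd_zero, map_zero, LinearMap.zero_comp]); exact L.zero_mem, by (try simp only [Prod.fst_zero, Prod.snd_zero, map_zero, LinearMap.zero_comp]); exact R.zero_mem, by simp⟩
  smul_mem' := by
    rintro r a ⟨ξ, η, h1, h2, h3⟩
    refine ⟨r • ξ, r • η, ?_, ?_, ?_⟩
    · simpa [Prod.smul_fst] using L.smul_mem r h1
    · simpa [Prod.smul_fst] using R.smul_mem r h2
    · simp only [Prod.smul_snd, h3, smul_add]

/-- The cotangent product `L ⊛ R = {(u+v, ξ) : (u,ξ) ∈ L, (v,ξ) ∈ R}`. -/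
def cotProd (L R : Submodule ℝ (V × Module.Dual ℝ V)) :
    Submodule ℝ (V × Module.Dual ℝ V) where
  carrier := {a | ∃ u v : V, (u, a.2) ∈ L ∧ (v, a.2) ∈ R ∧ a.1 = u + v}
  add_mem' := by
    rintro a b ⟨u, v, h1, h2, h3⟩ ⟨u', v', h1', h2', h3'⟩
    refine ⟨u + u', v + v', ?_, ?_, ?_⟩
    · simpa [Prod.snd_add] using L.add_mem h1 h1'
    · simpa [Prod.snd_add] using R.add_mem h2 h2'
    · simp only [Prod.fst_add, h3, h3']; abel
  zero_mem' := ⟨0, 0, by (try simp only [Prod.fst_zero, Prod.snd_zero, map_zero, LinearMap.zero_comp]); exact L.zero_mem, by (try simp only [Prod.fst_zero, Prod.snd_zero, map_zero, LinearMap.zero_comp]); exact R.zero_mem, by simp⟩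
  smul_mem' := by
    rintro r a ⟨u, v, h1, h2, h3⟩
    refine ⟨r • u, r • v, ?_, ?_, ?_⟩
    · simpa [Prod.smul_snd] using L.smul_mem r h1
    · simpa [Prod.smul_snd] using R.smul_mem r h2
    · simp only [Prod.smul_fst, h3, smul_add]

/-- The backward image `φ^!(L) = {(u, η ∘ φ) : (φ(u), η) ∈ L}`. -/
def back (φ : V →ₗ[ℝ] W) (L : Submodule ℝ (W × Module.Dual ℝ W)) :
    Submodule ℝ (V × Module.Dual ℝ V) where
  carrier := {a | ∃ η : Module.Dual ℝ W, (φ a.1, η) ∈ L ∧ a.2 = η.comp φ}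
  add_mem' := by
    rintro a b ⟨η, h1, h2⟩ ⟨η', h1', h2'⟩
    refine ⟨η + η', ?_, ?_⟩
    · simpa [Prod.fst_add, map_add] using L.add_mem h1 h1'
    · simp only [Prod.snd_add, h2, h2', LinearMap.add_comp]
  zero_mem' := ⟨0, by (try simp only [Prod.fst_zero, Prod.snd_zero, map_zero, LinearMap.zero_comp]); exact L.zero_mem, by simp⟩
  smul_mem' := by
    rintro r a ⟨η, h1, h2⟩
    refine ⟨r • η, ?_, ?_⟩
    · simpa [Prod.smul_fst, map_smul] using L.smul_mem r h1
    · simp only [Prod.smul_snd, h2, LinearMap.smul_comp]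

/-- The forward image `φ_!(L) = {(φ(u), η) : (u, η ∘ φ) ∈ L}`. -/
def fwd (φ : V →ₗ[ℝ] W) (L : Submodule ℝ (V × Module.Dual ℝ V)) :
    Submodule ℝ (W × Module.Dual ℝ W) where
  carrier := {b | ∃ u : V, φ u = b.1 ∧ (u, b.2.comp φ) ∈ L}
  add_mem' := by
    rintro a b ⟨u, h1, h2⟩ ⟨u', h1', h2'⟩
    refine ⟨u + u', ?_, ?_⟩
    · simp only [map_add, h1, h1', Prod.fst_add]
    · have := L.add_mem h2 h2'
      simpa [Prod.snd_add, LinearMap.add_comp] using this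
  zero_mem' := ⟨0, by simp, by (try simp only [Prod.fst_zero, Prod.snd_zero, map_zero, LinearMap.zero_comp]); exact L.zero_mem⟩
  smul_mem' := by
    rintro r a ⟨u, h1, h2⟩
    refine ⟨r • u, ?_, ?_⟩
    · simp only [map_smul, h1, Prod.smul_fst]
    · have := L.smul_mem r h2
      simpa [Prod.smul_snd, LinearMap.smul_comp] using this

/-- The graph `Gr(π) = {(π(ξ), ξ) : ξ ∈ V*}` of a map `π : V* → V`. -/
def gr (π : Module.Dual ℝ V →ₗ[ℝ] V) : Submodule ℝ (V × Module.Dual ℝ V) where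
  carrier := {a | π a.2 = a.1}
  add_mem' := by
    intro a b ha hb
    simp only [Set.mem_setOf_eq, Prod.fst_add, Prod.snd_add, map_add] at *
    rw [ha, hb]
  zero_mem' := by simp
  smul_mem' := by
    intro r a ha
    simp only [Set.mem_setOf_eq, Prod.smul_fst, Prod.smul_snd, map_smul] at *
    rw [ha]

theorem stmt11 [FiniteDimensional ℝ V]
    (U : Submodule ℝ V) (L : Submodule ℝ (V × Module.Dual ℝ V))
    (hL : IsLagrangian L) :
    fwd U.subtype (back U.subtype L)
        = (L ⊓ gperp ((⊥ : Submodule ℝ V).prod U.dualAnnihilator))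
            ⊔ (⊥ : Submodule ℝ V).prod U.dualAnnihilator
      ∧ fwd U.subtype (back U.subtype L)
        = (L ⊓ U.prod (⊤ : Submodule ℝ (Module.Dual ℝ V)))
            ⊔ (⊥ : Submodule ℝ V).prod U.dualAnnihilator := by
  have hperp : gperp ((⊥ : Submodule ℝ V).prod U.dualAnnihilator)
      = U.prod (⊤ : Submodule ℝ (Module.Dual ℝ V)) := by
    ext a
    constructor
    · intro ha
      refine Submodule.mem_prod.mpr ⟨?_, trivial⟩
      rw [← Subspace.forall_mem_dualAnnihilator_apply_eq_zero_iff U a.1]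
      intro ζ hζ
      have := ha (0, ζ) (Submodule.mem_prod.mpr ⟨Submodule.zero_mem _, hζ⟩)
      simpa [gpair, LinearMap.mk₂_apply] using this
    · intro ha b hb
      obtain ⟨h1, -⟩ := Submodule.mem_prod.mp ha
      obtain ⟨hb1, hb2⟩ := Submodule.mem_prod.mp hb
      have hb1' : b.1 = 0 := hb1
      have := (Submodule.mem_dualAnnihilator _).mp hb2 a.1 h1
      simp [gpair, LinearMap.mk₂_apply, hb1', this]
  have hmain : fwd U.subtype (back U.subtype L)
      = (L ⊓ U.prod (⊤ : Submodule ℝ (Module.Dual ℝ V)))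
          ⊔ (⊥ : Submodule ℝ V).prod U.dualAnnihilator := by
    ext a
    rw [Submodule.mem_sup]
    constructor
    · rintro ⟨u, hu, ξ, hξL, hcomp⟩
      refine ⟨((u : V), ξ), ⟨hξL ,Submodule.mem_prod.mpr ⟨u.2, trivial⟩⟩,
        (0, a.2 - ξ), Submodule.mem_prod.mpr ⟨Submodule.zero_mem _, ?_⟩, ?_⟩
      · rw [Submodule.mem_dualAnnihilator _]
        intro w hw
        have := congrArg (fun f => f ⟨w, hw⟩) hcomp
        simp only [LinearMap.comp_apply, Submodule.subtype_apply] at this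
        simp [this]
      · have : (u : V) = a.1 := hu
        ext <;> simp [this]
    · rintro ⟨b, ⟨hbL, hbU⟩, c, hc, hsum⟩
      obtain ⟨hb1, -⟩ := Submodule.mem_prod.mp hbU
      obtain ⟨hc1, hc2⟩ := Submodule.mem_prod.mp hc
      have hc1' : c.1 = 0 := hc1
      have ha1 : a.1 = b.1 := by rw [← hsum]; simp [hc1']
      refine ⟨⟨b.1, hb1⟩, by simp [ha1], b.2, by simpa using hbL, ?_⟩
      ext w
      simp only [LinearMap.comp_apply, Submodule.subtype_apply]
      have : a.2 = b.2 + c.2 := by rw [← hsum]; simp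
      rw [this]
      simp [(Submodule.mem_dualAnnihilator _).mp hc2 w w.2]
  refine ⟨?_, hmain⟩
  rw [hperp]
  exact hmain
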